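/- arXiv:1005.4098 — 2 statements merged into one kernel-verified Lean document; each statement's English description precedes it below -/
import Mathlib

section
/- Fix s > 0 and let h(r,a) = (a/√(2πr³))·exp(−a²/(2r)). Suppose w : [0,s)×(0,∞) → ℝ is C^{1,2} and satisfies −∂w/∂t + f''(t)·a·w = (1/2)·∂²w/∂a², where f : [0,s] → ℝ is C². Define v(t,a) := w(t,a)/h(s−t,a). Then v satisfies −∂v/∂t + f''(t)·a·v = (1/2)·∂²v/∂a² + (1/a − a/(s−t))·∂v/∂a on [0,s)×(0,∞). -/
open Real

noncomputable def h (r a : ℝ) : ℝ := a / Real.sqrt (2 * Real.pi * r ^ 3) * Real.exp (-a ^ 2 / (2 * r))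

noncomputable def phi (s t a : ℝ) : ℝ :=
  Real.sqrt (2 * Real.pi * (s - t) ^ 3) / a * Real.exp (a ^ 2 / (2 * (s - t)))

lemma h_inv (s t a : ℝ) (ha : 0 < a) : (h (s - t) a)⁻¹ = phi s t a := by
  rcases le_or_gt (s - t) 0 with hr | hr
  · have h3 : (s - t) ^ 3 ≤ 0 := by nlinarith [sq_nonneg (s - t)]
    have hX : 2 * Real.pi * (s - t) ^ 3 ≤ 0 := by
      nlinarith [mul_nonneg Real.pi_pos.le (neg_nonneg.mpr h3)]
    have hs0 : Real.sqrt (2 * Real.pi * (s - t) ^ 3) = 0 := Real.sqrt_eq_zero'.mpr hX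
    simp [h, phi, hs0]
  · have hX : 0 < 2 * Real.pi * (s - t) ^ 3 := by positivity
    have hS : 0 < Real.sqrt (2 * Real.pi * (s - t) ^ 3) := Real.sqrt_pos.mpr hX
    rw [h, phi, mul_inv, inv_div, ← Real.exp_neg, neg_div, neg_neg]

lemma phi_deriv_t (s t a : ℝ) (hts : t < s) (ha : 0 < a) :
    HasDerivAt (fun t' => phi s t' a)
      (phi s t a * (-3 / (2 * (s - t)) + a ^ 2 / (2 * (s - t) ^ 2))) t := by
  have hr : 0 < s - t := by linarith
  have hX : 0 < 2 * Real.pi * (s - t) ^ 3 := by positivity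
  have hS : 0 < Real.sqrt (2 * Real.pi * (s - t) ^ 3) := Real.sqrt_pos.mpr hX
  have hu : HasDerivAt (fun t' => 2 * Real.pi * (s - t') ^ 3)
      (2 * Real.pi * (3 * (s - t) ^ 2 * (-1))) t := by
    exact (((hasDerivAt_id t).const_sub s).pow 3).const_mul (2 * Real.pi)
  have hsqrt := (hu.sqrt (ne_of_gt hX)).div_const a
  have hinner : HasDerivAt (fun t' => a ^ 2 / (2 * (s - t')))
      ((0 * (2 * (s - t)) - a ^ 2 * (2 * (-1))) / (2 * (s - t)) ^ 2) t := by
    exact (hasDerivAt_const t (a ^ 2)).div (((hasDerivAt_id t).const_sub s).const_mul 2)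
      (by positivity)
  have hexp := hinner.exp
  have := hsqrt.mul hexp
  convert this using 1 <;> try rfl
  unfold phi
  set S := Real.sqrt (2 * Real.pi * (s - t) ^ 3) with hSdef
  have hS2 : S ^ 2 = 2 * Real.pi * (s - t) ^ 3 := Real.sq_sqrt hX.le
  have hSne : S ≠ 0 := ne_of_gt hS
  have hpi : Real.pi = S ^ 2 / (2 * (s - t) ^ 3) := by
    rw [hS2]; field_simp
  rw [hpi]
  have hane : a ≠ 0 := ne_of_gt ha
  have hrne : s - t ≠ 0 := ne_of_gt hr
  field_simp
  ring

lemma phi_deriv_a (s t a : ℝ) (hts : t < s) (ha : 0 < a) :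
    HasDerivAt (fun a' => phi s t a')
      (phi s t a * (-1 / a + a / (s - t))) a := by
  have hr : 0 < s - t := by linarith
  set S := Real.sqrt (2 * Real.pi * (s - t) ^ 3) with hSdef
  have hdiv : HasDerivAt (fun a' : ℝ => S / a') (S * (-(a ^ 2)⁻¹)) a := by
    simpa [div_eq_mul_inv] using (hasDerivAt_inv (ne_of_gt ha)).const_mul S
  have hinner : HasDerivAt (fun a' : ℝ => a' ^ 2 / (2 * (s - t)))
      ((2 * a ^ 1) / (2 * (s - t))) a := by
    simpa using (hasDerivAt_pow 2 a).div_const (2 * (s - t))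
  have := hdiv.mul hinner.exp
  convert this using 1 <;> try rfl
  unfold phi; rw [← hSdef]
  have hane : a ≠ 0 := ne_of_gt ha
  have hrne : s - t ≠ 0 := ne_of_gt hr
  field_simp

theorem stmt_3 (s : ℝ) (hs : 0 < s) (f : ℝ → ℝ) (w : ℝ → ℝ → ℝ)
    (hf : ContDiff ℝ 2 f)
    (hwt : ∀ t a, t ∈ Set.Ico 0 s → 0 < a → DifferentiableAt ℝ (fun t' => w t' a) t)
    (hwa : ∀ t a, t ∈ Set.Ico 0 s → 0 < a → DifferentiableAt ℝ (fun a' => w t a') a)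
    (hwaa : ∀ t a, t ∈ Set.Ico 0 s → 0 < a →
      DifferentiableAt ℝ (fun a' => deriv (fun a'' => w t a'') a') a)
    (hpde : ∀ t a, t ∈ Set.Ico 0 s → 0 < a →
      -deriv (fun t' => w t' a) t + deriv (deriv f) t * a * w t a =
        (1 / 2) * deriv (fun a' => deriv (fun a'' => w t a'') a') a)
    (v : ℝ → ℝ → ℝ) (hv : ∀ t a, v t a = w t a / h (s - t) a) :
    ∀ t a, t ∈ Set.Ico 0 s → 0 < a →
      -deriv (fun t' => v t' a) t + deriv (deriv f) t * a * v t a =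
        (1 / 2) * deriv (fun a' => deriv (fun a'' => v t a'') a') a +
          (1 / a - a / (s - t)) * deriv (fun a' => v t a') a := by
  intro t a ht ha
  obtain ⟨ht0, hts⟩ := ht
  have hr : 0 < s - t := by linarith
  have ha' : a ≠ 0 := ne_of_gt ha
  have hrne : s - t ≠ 0 := ne_of_gt hr
  have hveq : ∀ t' a', 0 < a' → v t' a' = w t' a' * phi s t' a' := by
    intro t' a' ha''
    rw [hv, div_eq_mul_inv, h_inv s t' a' ha'']
  -- t-derivative
  have hvt : HasDerivAt (fun t' => v t' a)
      (deriv (fun t' => w t' a) t * phi s t a +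
        w t a * (phi s t a * (-3 / (2 * (s - t)) + a ^ 2 / (2 * (s - t) ^ 2)))) t := by
    have hfe : (fun t' => v t' a) = fun t' => w t' a * phi s t' a :=
      funext fun t' => hveq t' a ha
    rw [hfe]
    exact ((hwt t a ⟨ht0, hts⟩ ha).hasDerivAt).mul (phi_deriv_t s t a hts ha)
  -- a-derivative, valid near a
  have hva : ∀ a', 0 < a' → HasDerivAt (fun a'' => v t a'')
      (deriv (fun a'' => w t a'') a' * phi s t a' +
        w t a' * (phi s t a' * (-1 / a' + a' / (s - t)))) a' := by
    intro a' ha''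
    have heq : (fun a'' => w t a'' * phi s t a'') =ᶠ[nhds a'] (fun a'' => v t a'') :=
      (eventually_gt_nhds ha'').mono fun x hx => (hveq t x hx).symm
    exact (((hwa t a' ⟨ht0, hts⟩ ha'').hasDerivAt).mul
      (phi_deriv_a s t a' hts ha'')).congr_of_eventuallyEq heq.symm
  -- the derivative function agrees near a
  have hderiv_eq : (fun a' => deriv (fun a'' => v t a'') a') =ᶠ[nhds a]
      (fun a' => deriv (fun a'' => w t a'') a' * phi s t a' +
        w t a' * (phi s t a' * (-1 / a' + a' / (s - t)))) :=
    (eventually_gt_nhds ha).mono fun x hx => (hva x hx).deriv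
  -- derivative of the correction factor
  have hg : HasDerivAt (fun a' : ℝ => -1 / a' + a' / (s - t))
      (-(-(a ^ 2)⁻¹) + 1 / (s - t)) a := by
    have h1 : HasDerivAt (fun a' : ℝ => -1 / a') (-(-(a ^ 2)⁻¹)) a := by
      have := (hasDerivAt_inv ha').neg
      convert this using 1 <;> try rfl
      funext y; simp [neg_div, one_div]
    exact h1.add ((hasDerivAt_id a).div_const (s - t))
  have hD := (((hwaa t a ⟨ht0, hts⟩ ha).hasDerivAt).mul (phi_deriv_a s t a hts ha)).add
      (((hwa t a ⟨ht0, hts⟩ ha).hasDerivAt).mul ((phi_deriv_a s t a hts ha).mul hg))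
  have hsecond : deriv (fun a' => deriv (fun a'' => v t a'') a') a =
      (deriv (fun a' => deriv (fun a'' => w t a'') a') a * phi s t a +
        deriv (fun a'' => w t a'') a * (phi s t a * (-1 / a + a / (s - t)))) +
      (deriv (fun a'' => w t a'') a * (phi s t a * (-1 / a + a / (s - t))) +
        w t a * ((phi s t a * (-1 / a + a / (s - t))) * (-1 / a + a / (s - t)) +
          phi s t a * (-(-(a ^ 2)⁻¹) + 1 / (s - t)))) :=
    hderiv_eq.deriv_eq.trans hD.deriv
  have hW2 : deriv (fun a' => deriv (fun a'' => w t a'') a') a =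
      2 * (-(deriv (fun t' => w t' a) t) + deriv (deriv f) t * a * w t a) := by
    have := hpde t a ⟨ht0, hts⟩ ha
    linarith
  rw [hvt.deriv, (hva a ha).deriv, hsecond, hW2, hveq t a ha]
  field_simp
  ring
end

section
/- Conversely, fix s > 0 and suppose v : [0,s)×(0,∞) → ℝ is C^{1,2} and satisfies the Bessel-bridge Cauchy equation −∂v/∂t + f''(t)·a·v = (1/2)·∂²v/∂a² + (1/a − a/(s−t))·∂v/∂a, where f is C². Then w(t,a) := v(t,a)·h(s−t,a), with h(r,a) = (a/√(2πr³))·exp(−a²/(2r)), satisfies the Schrödinger-type equation −∂w/∂t + f''(t)·a·w = (1/2)·∂²w/∂a² on [0,s)×(0,∞). -/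
open Real

lemma S_pos {r : ℝ} (hr : 0 < r) : 0 < Real.sqrt (2 * Real.pi * r ^ 3) :=
  Real.sqrt_pos.mpr (by positivity)

lemma hasDerivAt_h_a {r : ℝ} (hr : 0 < r) (a : ℝ) :
    HasDerivAt (fun x => h r x)
      ((1 - a ^ 2 / r) * Real.exp (-a ^ 2 / (2 * r)) / Real.sqrt (2 * Real.pi * r ^ 3)) a := by
  have S0 := (S_pos hr).ne'
  have p : HasDerivAt (fun x : ℝ => -x ^ 2 / (2 * r)) (-(2 * a ^ 1) / (2 * r)) a :=
    (hasDerivAt_pow 2 a).neg.div_const (2 * r)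
  have M := ((hasDerivAt_id a).div_const (Real.sqrt (2 * Real.pi * r ^ 3))).mul p.exp
  refine M.congr_deriv ?_
  simp only [id_eq]
  field_simp
  ring

lemma hasDerivAt_D {r : ℝ} (hr : 0 < r) (a : ℝ) :
    HasDerivAt
      (fun x => (1 - x ^ 2 / r) * Real.exp (-x ^ 2 / (2 * r)) / Real.sqrt (2 * Real.pi * r ^ 3))
      ((a ^ 2 / r ^ 2 - 3 / r) * h r a) a := by
  have S0 := (S_pos hr).ne'
  have p : HasDerivAt (fun x : ℝ => -x ^ 2 / (2 * r)) (-(2 * a ^ 1) / (2 * r)) a :=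
    (hasDerivAt_pow 2 a).neg.div_const (2 * r)
  have q : HasDerivAt (fun x : ℝ => 1 - x ^ 2 / r) (-((2 * a ^ 1) / r)) a := by
    simpa using ((hasDerivAt_pow 2 a).div_const r).const_sub 1
  have M := (q.mul p.exp).div_const (Real.sqrt (2 * Real.pi * r ^ 3))
  refine M.congr_deriv ?_
  unfold h
  field_simp
  ring

lemma hasDerivAt_h_r {r : ℝ} (hr : 0 < r) (a : ℝ) :
    HasDerivAt (fun x => h x a) ((a ^ 2 / (2 * r ^ 2) - 3 / (2 * r)) * h r a) r := by
  have h0 : (0:ℝ) < 2 * Real.pi * r ^ 3 := by positivity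
  have S0 := (S_pos hr).ne'
  have g : HasDerivAt (fun x : ℝ => 2 * Real.pi * x ^ 3) (2 * Real.pi * (3 * r ^ 2)) r := by
    simpa [mul_comm] using ((hasDerivAt_pow 3 r).const_mul (2 * Real.pi))
  have sq : HasDerivAt (fun x : ℝ => Real.sqrt (2 * Real.pi * x ^ 3))
      (1 / (2 * Real.sqrt (2 * Real.pi * r ^ 3)) * (2 * Real.pi * (3 * r ^ 2))) r := by
    exact (Real.hasDerivAt_sqrt h0.ne').comp r g
  have frac : HasDerivAt (fun x : ℝ => a / Real.sqrt (2 * Real.pi * x ^ 3))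
      ((0 * Real.sqrt (2 * Real.pi * r ^ 3) - a * (1 / (2 * Real.sqrt (2 * Real.pi * r ^ 3)) * (2 * Real.pi * (3 * r ^ 2)))) / (Real.sqrt (2 * Real.pi * r ^ 3)) ^ 2) r :=
    (hasDerivAt_const r a).div sq S0
  have idm : HasDerivAt (fun x : ℝ => 2 * x) 2 r := by
    simpa using (hasDerivAt_id r).const_mul 2
  have ep : HasDerivAt (fun x : ℝ => -a ^ 2 / (2 * x))
      ((0 * (2 * r) - (-a ^ 2) * 2) / (2 * r) ^ 2) r :=
    (hasDerivAt_const r (-a ^ 2)).div idm (by positivity)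
  have M := frac.mul ep.exp
  refine M.congr_deriv ?_
  unfold h
  have hsq : Real.sqrt (2 * Real.pi * r ^ 3) ^ 2 = 2 * Real.pi * r ^ 3 := Real.sq_sqrt h0.le
  obtain ⟨S, hS⟩ : ∃ S, Real.sqrt (2 * Real.pi * r ^ 3) = S := ⟨_, rfl⟩
  rw [hS] at hsq S0 ⊢
  rw [hsq]
  field_simp
  ring

theorem stmt_4 (s : ℝ) (hs : 0 < s) (f : ℝ → ℝ) (v : ℝ → ℝ → ℝ)
    (hf : ContDiff ℝ 2 f)
    (hvt : ∀ t a, t ∈ Set.Ico 0 s → 0 < a → DifferentiableAt ℝ (fun t' => v t' a) t)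
    (hva : ∀ t a, t ∈ Set.Ico 0 s → 0 < a → DifferentiableAt ℝ (fun a' => v t a') a)
    (hvaa : ∀ t a, t ∈ Set.Ico 0 s → 0 < a →
      DifferentiableAt ℝ (fun a' => deriv (fun a'' => v t a'') a') a)
    (hpde : ∀ t a, t ∈ Set.Ico 0 s → 0 < a →
      -deriv (fun t' => v t' a) t + deriv (deriv f) t * a * v t a =
        (1 / 2) * deriv (fun a' => deriv (fun a'' => v t a'') a') a +
          (1 / a - a / (s - t)) * deriv (fun a' => v t a') a)
    (w : ℝ → ℝ → ℝ) (hw : ∀ t a, w t a = v t a * h (s - t) a) :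
    ∀ t a, t ∈ Set.Ico 0 s → 0 < a →
      -deriv (fun t' => w t' a) t + deriv (deriv f) t * a * w t a =
        (1 / 2) * deriv (fun a' => deriv (fun a'' => w t a'') a') a := by
  intro t a ht ha
  have hpd := hpde t a ht ha
  have hr0 : 0 < s - t := sub_pos.mpr ht.2
  obtain ⟨r, hrdef⟩ : ∃ r, s - t = r := ⟨_, rfl⟩
  rw [hrdef] at hpd hr0
  have hw' : ∀ x, w t x = v t x * h r x := fun x => by rw [hw t x, hrdef]
  have hr : 0 < r := hr0
  have S0 := (S_pos hr).ne'
  -- time derivative of w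
  have hwt : deriv (fun t' => w t' a) t =
      deriv (fun t' => v t' a) t * h r a +
        v t a * (-((a ^ 2 / (2 * r ^ 2) - 3 / (2 * r)) * h r a)) := by
    have hst : HasDerivAt (fun t' : ℝ => s - t') (-1) t := by
      simpa using (hasDerivAt_id t).const_sub s
    have hh : HasDerivAt (fun x => h x a) ((a ^ 2 / (2 * r ^ 2) - 3 / (2 * r)) * h r a) (s - t) := by
      rw [hrdef]; exact hasDerivAt_h_r hr a
    have hcomp : HasDerivAt (fun t' => h (s - t') a)
        ((a ^ 2 / (2 * r ^ 2) - 3 / (2 * r)) * h r a * (-1)) t := hh.comp t hst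
    have := ((hvt t a ht ha).hasDerivAt.mul hcomp)
    have heq : (fun t' => w t' a) = fun t' => v t' a * h (s - t') a := funext fun t' => hw t' a
    rw [heq]
    rw [hrdef] at this
    rw [show (fun t' => v t' a * h (s - t') a) = ((fun t' => v t' a) * fun t' => h (s - t') a) from rfl, this.deriv]
    ring
  -- first space derivative of w, as a function near a
  have key : ∀ b : ℝ, 0 < b → deriv (fun a'' => w t a'') b =
      deriv (fun a'' => v t a'') b * h r b +
        v t b * ((1 - b ^ 2 / r) * Real.exp (-b ^ 2 / (2 * r)) / Real.sqrt (2 * Real.pi * r ^ 3)) := by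
    intro b hb
    have heq : (fun a'' => w t a'') = fun a'' => v t a'' * h r a'' := funext fun x => hw' x
    rw [heq]
    exact ((hva t b ht hb).hasDerivAt.mul (hasDerivAt_h_a hr b)).deriv
  have hev : (fun a' => deriv (fun a'' => w t a'') a') =ᶠ[nhds a]
      (fun a' => deriv (fun a'' => v t a'') a' * h r a' +
        v t a' * ((1 - a' ^ 2 / r) * Real.exp (-a' ^ 2 / (2 * r)) / Real.sqrt (2 * Real.pi * r ^ 3))) := by
    filter_upwards [Ioi_mem_nhds ha] with b hb
    exact key b hb
  have hwaa : deriv (fun a' => deriv (fun a'' => w t a'') a') a =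
      (deriv (fun a' => deriv (fun a'' => v t a'') a') a * h r a +
        deriv (fun a' => v t a') a * ((1 - a ^ 2 / r) * Real.exp (-a ^ 2 / (2 * r)) / Real.sqrt (2 * Real.pi * r ^ 3))) +
      (deriv (fun a' => v t a') a * ((1 - a ^ 2 / r) * Real.exp (-a ^ 2 / (2 * r)) / Real.sqrt (2 * Real.pi * r ^ 3)) +
        v t a * ((a ^ 2 / r ^ 2 - 3 / r) * h r a)) := by
    rw [hev.deriv_eq]
    have d1 := (hvaa t a ht ha).hasDerivAt.mul (hasDerivAt_h_a hr a)
    have d2 := (hva t a ht ha).hasDerivAt.mul (hasDerivAt_D hr a)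
    exact (d1.add d2).deriv
  rw [hw' a, hwt, hwaa]
  -- convert D-expression to (1/a - a/r) * h r a
  have hDa : (1 - a ^ 2 / r) * Real.exp (-a ^ 2 / (2 * r)) / Real.sqrt (2 * Real.pi * r ^ 3) =
      (1 / a - a / r) * h r a := by
    unfold h
    field_simp
  rw [hDa]
  have hr' : r ≠ 0 := hr.ne'
  have ha' : a ≠ 0 := ha.ne'
  unfold h
  obtain ⟨S, hS⟩ : ∃ S, Real.sqrt (2 * Real.pi * r ^ 3) = S := ⟨_, rfl⟩
  rw [hS] at S0 ⊢
  field_simp at hpd ⊢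
  linear_combination r * hpd
end
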